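/- Let A be a finite-dimensional real Leibniz algebra and define a ◁_s b = e^{s·ad_b}(a) for a,b ∈ A and s ∈ ℝ. Then this operation satisfies the self-distributivity identity (a ◁_t b) ◁_s c = (a ◁_s c) ◁_t (b ◁_s c) for all a,b,c ∈ A and all s,t ∈ ℝ. -/

import Mathlib

set_option maxHeartbeats 1000000
set_option synthInstance.maxHeartbeats 400000

open NormedSpace

/-- The exponential rack operation `a ◁_s b = e^{s·ad_b}(a)` on a
finite-dimensional real Leibniz algebra with bracket `br` (`ad_b a = br a b`). -/
noncomputable def leibnizRackOp
    {A : Type*} [NormedAddCommGroup A] [NormedSpace ℝ A] [FiniteDimensional ℝ A]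
    (br : A →ₗ[ℝ] A →ₗ[ℝ] A) (s : ℝ) (a b : A) : A :=
  exp (s • LinearMap.toContinuousLinearMap (br.flip b)) a

section Aux

variable {E F : Type*} [NormedAddCommGroup E] [NormedSpace ℝ E] [CompleteSpace E]
  [NormedAddCommGroup F] [NormedSpace ℝ F] [CompleteSpace F]

lemma exp_apply_eq_tsum (T : E →L[ℝ] E) (x : E) :
    exp T x = ∑' n : ℕ, ((n.factorial : ℝ))⁻¹ • (T ^ n) x := by
  rw [exp_eq_tsum ℝ]
  have := (ContinuousLinearMap.apply ℝ E x).map_tsum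
    (expSeries_summable' (𝕂 := ℝ) T)
  simpa only [Function.comp_def, ContinuousLinearMap.apply_apply, ContinuousLinearMap.smul_apply] using this

lemma summable_exp_apply (T : E →L[ℝ] E) (x : E) :
    Summable fun n : ℕ => ((n.factorial : ℝ))⁻¹ • (T ^ n) x := by
  have := (expSeries_summable' (𝕂 := ℝ) T).map
    (ContinuousLinearMap.apply ℝ E x) (ContinuousLinearMap.apply ℝ E x).continuous
  simpa only [Function.comp_def, ContinuousLinearMap.apply_apply, ContinuousLinearMap.smul_apply] using this

/-- If `f` intertwines `T` and `S`, it intertwines their exponentials. -/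
lemma exp_intertwine (f : E →L[ℝ] F) (T : E →L[ℝ] E) (S : F →L[ℝ] F)
    (h : ∀ x, f (T x) = S (f x)) (x : E) :
    f (exp T x) = exp S (f x) := by
  have hpow : ∀ (n : ℕ) (x : E), f ((T ^ n) x) = (S ^ n) (f x) := by
    intro n
    induction n with
    | zero => simp
    | succ n ih =>
      intro x
      rw [pow_succ, pow_succ, ContinuousLinearMap.mul_apply,
        ContinuousLinearMap.mul_apply, ih, h]
  rw [exp_apply_eq_tsum, exp_apply_eq_tsum, f.map_tsum (summable_exp_apply T x)]
  exact tsum_congr fun n => by rw [map_smul, hpow]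

/-- Exponential of left multiplication. -/
lemma exp_mul_left {B : Type*} [NormedRing B] [NormedAlgebra ℝ B] [CompleteSpace B]
    (M Y : B) : exp (ContinuousLinearMap.mul ℝ B M) Y = exp M * Y := by
  have hpow : ∀ n : ℕ, ((ContinuousLinearMap.mul ℝ B M) ^ n) Y = M ^ n * Y := by
    intro n
    induction n with
    | zero => simp
    | succ n ih =>
      rw [pow_succ', ContinuousLinearMap.mul_apply, ih,
        ContinuousLinearMap.mul_apply', pow_succ', mul_assoc]
  have h2 : exp M * Y = ∑' n : ℕ, ((n.factorial : ℝ))⁻¹ • (M ^ n * Y) := by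
    have := ((ContinuousLinearMap.mul ℝ B).flip Y).map_tsum
      (expSeries_summable' (𝕂 := ℝ) M)
    simp only [exp_eq_tsum ℝ]
    simpa [smul_mul_assoc] using this
  rw [exp_apply_eq_tsum, h2]
  exact tsum_congr fun n => by rw [hpow]

/-- Exponential of right multiplication. -/
lemma exp_mul_right {B : Type*} [NormedRing B] [NormedAlgebra ℝ B] [CompleteSpace B]
    (M Y : B) : exp ((ContinuousLinearMap.mul ℝ B).flip M) Y = Y * exp M := by
  have hpow : ∀ n : ℕ, (((ContinuousLinearMap.mul ℝ B).flip M) ^ n) Y = Y * M ^ n := by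
    intro n
    induction n with
    | zero => simp
    | succ n ih =>
      rw [pow_succ', ContinuousLinearMap.mul_apply, ih]
      simp only [ContinuousLinearMap.flip_apply, ContinuousLinearMap.mul_apply']
      rw [pow_succ, ← mul_assoc]
  have h2 : Y * exp M = ∑' n : ℕ, ((n.factorial : ℝ))⁻¹ • (Y * M ^ n) := by
    have := (ContinuousLinearMap.mul ℝ B Y).map_tsum
      (expSeries_summable' (𝕂 := ℝ) M)
    simp only [exp_eq_tsum ℝ]
    simpa [mul_smul_comm] using this
  rw [exp_apply_eq_tsum, h2]
  exact tsum_congr fun n => by rw [hpow]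

/-- Hadamard-type lemma: `exp (L_M - R_M) Y = exp M * Y * exp (-M)`. -/
lemma exp_ad_eq_conj {B : Type*} [NormedRing B] [NormedAlgebra ℝ B] [CompleteSpace B]
    (M Y : B) :
    exp (ContinuousLinearMap.mul ℝ B M - (ContinuousLinearMap.mul ℝ B).flip M) Y
      = exp M * Y * exp (-M) := by
  let +nondep : NormedAlgebra ℚ (B →L[ℝ] B) := .restrictScalars ℚ ℝ (B →L[ℝ] B)
  have hcomm : Commute (ContinuousLinearMap.mul ℝ B M)
      (-(ContinuousLinearMap.mul ℝ B).flip M) := by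
    apply Commute.neg_right
    ext Z
    simp [ContinuousLinearMap.mul_apply, ContinuousLinearMap.mul_apply', mul_assoc]
  have hneg : -(ContinuousLinearMap.mul ℝ B).flip M
      = (ContinuousLinearMap.mul ℝ B).flip (-M) := by
    ext Z
    simp [ContinuousLinearMap.mul_apply']
  rw [sub_eq_add_neg, exp_add_of_commute hcomm, ContinuousLinearMap.mul_apply, hneg,
    exp_mul_right, exp_mul_left, mul_assoc]

end Aux

/-- the exponential rack operation is self-distributive:
`(a ◁_t b) ◁_s c = (a ◁_s c) ◁_t (b ◁_s c)`. -/
theorem leibnizRackOp_self_distrib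
    {A : Type*} [NormedAddCommGroup A] [NormedSpace ℝ A] [FiniteDimensional ℝ A]
    (br : A →ₗ[ℝ] A →ₗ[ℝ] A)
    (leib : ∀ x y z : A, br (br x y) z = br (br x z) y + br x (br y z))
    (a b c : A) (s t : ℝ) :
    leibnizRackOp br s (leibnizRackOp br t a b) c =
      leibnizRackOp br t (leibnizRackOp br s a c) (leibnizRackOp br s b c) := by
  classical
  let +nondep : NormedAlgebra ℚ (A →L[ℝ] A) := .restrictScalars ℚ ℝ (A →L[ℝ] A)
  -- the adjoint map `Φ : A →L[ℝ] (A →L[ℝ] A)`, `Φ x = ad_x = (a ↦ br a x)`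
  set Φ : A →L[ℝ] (A →L[ℝ] A) := LinearMap.toContinuousLinearMap
    ((LinearMap.toContinuousLinearMap.toLinearMap :
      (A →ₗ[ℝ] A) →ₗ[ℝ] (A →L[ℝ] A)).comp br.flip) with hΦdef
  have hΦ : ∀ x : A, Φ x = LinearMap.toContinuousLinearMap (br.flip x) := fun x => rfl
  set M : A →L[ℝ] A := s • LinearMap.toContinuousLinearMap (br.flip c) with hM
  set δ : (A →L[ℝ] A) →L[ℝ] (A →L[ℝ] A) :=
    ContinuousLinearMap.mul ℝ (A →L[ℝ] A) M
      - (ContinuousLinearMap.mul ℝ (A →L[ℝ] A)).flip M with hδ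
  -- the intertwining relation coming from the Leibniz identity
  have key : ∀ x : A, Φ (M x) = δ (Φ x) := by
    intro x
    ext y
    have h := leib y x c
    have h1 : Φ (M x) y = s • br y (br x c) := by
      simp [hΦ, hM]
    have h2 : δ (Φ x) y = s • br (br y x) c - br (s • br y c) x := by
      simp [hδ, hΦ, ContinuousLinearMap.mul_apply, ContinuousLinearMap.mul_apply',
        ContinuousLinearMap.mul_apply, hM]
    rw [h1, h2, map_smul, LinearMap.smul_apply, h]
    module
  -- `Φ (exp M b) = exp M * (Φ b) * exp (-M)`
  have hconj : Φ (exp M b) = exp M * (Φ b) * exp (-M) := by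
    rw [exp_intertwine Φ M δ key b, hδ, exp_ad_eq_conj]
  -- the unit `u = exp M`
  have hMM : Commute M (-M) := (Commute.refl M).neg_right
  have hu1 : exp M * exp (-M) = 1 := by
    rw [← exp_add_of_commute hMM, add_neg_cancel, exp_zero]
  have hu2 : exp (-M) * exp M = 1 := by
    rw [← exp_add_of_commute hMM.symm, neg_add_cancel, exp_zero]
  set u : (A →L[ℝ] A)ˣ := ⟨exp M, exp (-M), hu1, hu2⟩ with hu
  -- rewrite everything
  show exp M (exp (t • LinearMap.toContinuousLinearMap (br.flip b)) a)
      = exp (t • LinearMap.toContinuousLinearMap (br.flip (exp M b))) (exp M a)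
  have hΦb : LinearMap.toContinuousLinearMap (br.flip (exp M b))
      = (u : A →L[ℝ] A) * (Φ b) * (↑u⁻¹ : A →L[ℝ] A) := by
    rw [← hΦ, hconj]; rfl
  have hsmul : t • (LinearMap.toContinuousLinearMap (br.flip (exp M b)))
      = (u : A →L[ℝ] A) * (t • Φ b) * (↑u⁻¹ : A →L[ℝ] A) := by
    rw [hΦb, mul_smul_comm, smul_mul_assoc]
  rw [hsmul, exp_units_conj u (t • Φ b)]
  have happ : ((u : A →L[ℝ] A) * exp (t • Φ b) * (↑u⁻¹ : A →L[ℝ] A)) (exp M a)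
      = exp M (exp (t • Φ b) a) := by
    have hz : (↑u⁻¹ : A →L[ℝ] A) (exp M a) = a := by
      have h1 : ((↑u⁻¹ : A →L[ℝ] A) * (u : A →L[ℝ] A)) a = a := by
        rw [u.inv_mul]; rfl
      exact h1
    simp only [ContinuousLinearMap.mul_apply, hz]
    rfl
  rw [happ, hΦ b]
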